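/- Let n ≥ 3 be an integer and f a polynomial with integer coefficients such that f(2)² > f(1)·f(3) and f(m) > 0 for all positive integers m. Then for any positive integer k ≤ n-1, H*_{k+1,f}(n) < (1/f(1) + ∑_{t=3}^n 1/f(t)) · H*_{k,f}(n). -/

import Mathlib

open Finset

/-- The multiple harmonic star sum `H*_{k,f}(n) = ∑_{1 ≤ i₁ ≤ ⋯ ≤ i_k ≤ n} ∏_j 1/f(i_j)`. -/
noncomputable def Hstar (f : Polynomial ℤ) (k n : ℕ) : ℚ :=
  ∑ i ∈ (Fintype.piFinset fun _ : Fin k => Finset.Icc 1 n).filter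
      (fun i => ∀ a b : Fin k, a ≤ b → i a ≤ i b),
    ∏ j : Fin k, (1 : ℚ) / ((f.eval ((i j : ℕ) : ℤ) : ℤ) : ℚ)

noncomputable def aQ (f : Polynomial ℤ) (t : ℕ) : ℚ := 1 / ((f.eval ((t : ℕ) : ℤ) : ℤ) : ℚ)

lemma sort_coe_of_sorted {l : List ℕ} (hl : l.Pairwise (· ≤ ·)) :
    Multiset.sort (↑l) (· ≤ ·) = l := by
  rw [Multiset.coe_sort]; exact List.mergeSort_eq_self _ (by simpa using hl)

lemma Hstar_eq_sym (f : Polynomial ℤ) (k n : ℕ) :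
    Hstar f k n = ∑ S ∈ (Finset.Icc 1 n).sym k, ((S : Multiset ℕ).map (aQ f)).prod := by
  unfold Hstar
  refine Finset.sum_bij' (i := fun i _ => (⟨(List.ofFn i : Multiset ℕ), by simp⟩ : Sym ℕ k))
    (j := fun S hS => fun j : Fin k =>
      ((S : Multiset ℕ).sort (· ≤ ·)).get
        (Fin.cast (by rw [Multiset.length_sort]; exact S.2.symm) j))
    ?_ ?_ ?_ ?_ ?_
  · intro i hi
    simp only [Finset.mem_filter, Fintype.mem_piFinset] at hi
    refine Finset.mem_sym_iff.mpr ?_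
    intro a ha
    simp only [Sym.mem_mk, Multiset.mem_coe, List.mem_ofFn] at ha
    obtain ⟨j, rfl⟩ := ha
    exact hi.1 j
  · intro S hS
    rw [Finset.mem_sym_iff] at hS
    simp only [Finset.mem_filter, Fintype.mem_piFinset]
    constructor
    · intro j
      apply hS
      rw [← Sym.mem_coe, ← Multiset.mem_sort (· ≤ ·)]
      exact List.get_mem _ _
    · intro a b hab
      exact List.Pairwise.rel_get_of_le (Multiset.pairwise_sort _ _) (by simpa using hab)
  · intro i hi
    simp only [Finset.mem_filter, Fintype.mem_piFinset] at hi
    have hmono : Monotone i := fun a b hab => hi.2 a b hab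
    funext j
    simp only [Sym.coe_mk]
    have hs : Multiset.sort ((List.ofFn i : List ℕ) : Multiset ℕ) (· ≤ ·) = List.ofFn i :=
      sort_coe_of_sorted hmono.sortedLE_ofFn.pairwise
    rw [List.get_of_eq hs]
    simp [List.get_ofFn]
    rfl
  · intro S hS
    apply Sym.coe_injective
    simp only [Sym.coe_mk]
    conv_rhs => rw [← Multiset.sort_eq (S : Multiset ℕ) (· ≤ ·)]
    congr 1
    apply List.ext_get (by simp [S.2])
    intro m h1 h2
    simp [List.get_ofFn]
  · intro i hi
    rw [← List.prod_ofFn]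
    congr 1
    rw [List.map_ofFn]
    rfl

lemma fiber_sum (f : Polynomial ℤ) (k n t : ℕ) :
    ∑ S ∈ ((Finset.Icc 1 n).sym (k+1)).filter (fun S => t ∈ S),
        ((S : Multiset ℕ).map (aQ f)).prod
      = (if t ∈ Finset.Icc 1 n then
          aQ f t * ∑ S ∈ (Finset.Icc 1 n).sym k, ((S : Multiset ℕ).map (aQ f)).prod else 0) := by
  by_cases ht : t ∈ Finset.Icc 1 n
  · rw [if_pos ht, Finset.mul_sum]
    refine Finset.sum_bij' (i := fun S hS => S.erase t (Finset.mem_filter.mp hS).2)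
      (j := fun S _ => t ::ₛ S) ?_ ?_ ?_ ?_ ?_
    · intro S hS
      rw [Finset.mem_sym_iff]
      intro a ha
      have hS' := (Finset.mem_filter.mp hS).1
      rw [Finset.mem_sym_iff] at hS'
      apply hS'
      have : a ∈ ((S.erase t (Finset.mem_filter.mp hS).2 : Sym ℕ k) : Multiset ℕ) := ha
      rw [Sym.coe_erase] at this
      exact Multiset.mem_of_mem_erase this
    · intro S hS
      rw [Finset.mem_filter]
      refine ⟨?_, Sym.mem_cons_self t S⟩
      rw [Finset.mem_sym_iff] at hS ⊢
      intro a ha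
      rcases Sym.mem_cons.mp ha with h | h
      · exact h ▸ ht
      · exact hS a h
    · intro S hS
      exact Sym.cons_erase _
    · intro S hS
      exact Sym.erase_cons_head S t _
    · intro S hS
      conv_lhs => rw [← Sym.cons_erase (Finset.mem_filter.mp hS).2]
      rw [Sym.coe_cons, Multiset.map_cons, Multiset.prod_cons]
  · rw [if_neg ht]
    apply Finset.sum_eq_zero
    intro S hS
    exfalso
    rw [Finset.mem_filter, Finset.mem_sym_iff] at hS
    exact ht (hS.1 t hS.2)

lemma key_identity (f : Polynomial ℤ) (k n : ℕ) (T : Finset ℕ) (hT : T ⊆ Finset.Icc 1 n) :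
    (∑ t ∈ T, aQ f t) * (∑ S ∈ (Finset.Icc 1 n).sym k, ((S : Multiset ℕ).map (aQ f)).prod)
      = ∑ S ∈ (Finset.Icc 1 n).sym (k+1),
          ((T.filter (fun t => t ∈ S)).card : ℚ) * ((S : Multiset ℕ).map (aQ f)).prod := by
  rw [Finset.sum_mul]
  have : ∀ t ∈ T, aQ f t * (∑ S ∈ (Finset.Icc 1 n).sym k, ((S : Multiset ℕ).map (aQ f)).prod)
      = ∑ S ∈ ((Finset.Icc 1 n).sym (k+1)).filter (fun S => t ∈ S),
          ((S : Multiset ℕ).map (aQ f)).prod := by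
    intro t ht
    rw [fiber_sum, if_pos (hT ht)]
  rw [Finset.sum_congr rfl this]
  simp_rw [Finset.sum_filter]
  rw [Finset.sum_comm]
  refine Finset.sum_congr rfl fun S _ => ?_
  rw [← Finset.sum_filter, Finset.sum_const, nsmul_eq_mul]

theorem stmt2 (n : ℕ) (hn : 3 ≤ n) (f : Polynomial ℤ)
    (hf : ∀ m : ℤ, 0 < m → 0 < f.eval m)
    (hf2 : f.eval 1 * f.eval 3 < (f.eval 2) ^ 2)
    (k : ℕ) (hk1 : 1 ≤ k) (hk2 : k ≤ n - 1) :
    Hstar f (k + 1) n <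
      ((1 : ℚ) / ((f.eval 1 : ℤ) : ℚ) +
        ∑ t ∈ Finset.Icc 3 n, (1 : ℚ) / ((f.eval ((t : ℕ) : ℤ) : ℤ) : ℚ)) * Hstar f k n := by
  have hapos : ∀ t : ℕ, 1 ≤ t → 0 < aQ f t := by
    intro t ht
    have h := hf t (by exact_mod_cast ht)
    unfold aQ
    positivity
  have hwnn : ∀ S : Sym ℕ (k+1), S ∈ (Finset.Icc 1 n).sym (k+1) →
      0 ≤ ((S : Multiset ℕ).map (aQ f)).prod := by
    intro S hS
    apply Multiset.prod_nonneg
    intro x hx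
    rw [Multiset.mem_map] at hx
    obtain ⟨a, ha, rfl⟩ := hx
    rw [Finset.mem_sym_iff] at hS
    have := hS a ha
    rw [Finset.mem_Icc] at this
    exact (hapos a this.1).le
  set T : Finset ℕ := insert 1 (Finset.Icc 3 n) with hTdef
  have h2T : (2:ℕ) ∉ T := by simp [hTdef]
  have hTsub : T ⊆ Finset.Icc 1 n := by
    intro x hx
    rcases Finset.mem_insert.mp hx with rfl | hx
    · exact Finset.mem_Icc.mpr ⟨le_refl 1, by omega⟩
    · rw [Finset.mem_Icc] at hx ⊢; omega
  have hcoef : (1 : ℚ) / ((f.eval 1 : ℤ) : ℚ) +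
        ∑ t ∈ Finset.Icc 3 n, (1 : ℚ) / ((f.eval ((t : ℕ) : ℤ) : ℤ) : ℚ) = ∑ t ∈ T, aQ f t := by
    rw [hTdef, Finset.sum_insert (by simp)]
    congr 1
  rw [Hstar_eq_sym, Hstar_eq_sym, hcoef, key_identity f k n T hTsub, ← sub_pos,
    ← Finset.sum_sub_distrib]
  set A := (Finset.Icc 1 n).sym (k+1) with hA
  set g : Sym ℕ (k+1) → ℚ := fun S =>
    ((T.filter (fun t => t ∈ S)).card : ℚ) * ((S : Multiset ℕ).map (aQ f)).prod
      - ((S : Multiset ℕ).map (aQ f)).prod with hg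
  show 0 < ∑ S ∈ A, g S
  set S₀ : Sym ℕ (k+1) := ⟨Multiset.replicate (k+1) 2, by simp⟩ with hS0
  set S₁ : Sym ℕ (k+1) := ⟨1 ::ₘ 3 ::ₘ Multiset.replicate (k-1) 2, by
    rw [Multiset.card_cons, Multiset.card_cons, Multiset.card_replicate]; omega⟩ with hS1
  have hS0A : S₀ ∈ A := by
    rw [hA, Finset.mem_sym_iff]
    intro a ha
    have : a = 2 := Multiset.eq_of_mem_replicate ha
    rw [this, Finset.mem_Icc]; omega
  have hS1A : S₁ ∈ A := by
    rw [hA, Finset.mem_sym_iff]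
    intro a ha
    have ha' : a ∈ (1 ::ₘ 3 ::ₘ Multiset.replicate (k-1) 2) := ha
    rw [Multiset.mem_cons, Multiset.mem_cons] at ha'
    rcases ha' with rfl | rfl | h
    · rw [Finset.mem_Icc]; omega
    · rw [Finset.mem_Icc]; omega
    · have : a = 2 := Multiset.eq_of_mem_replicate h
      rw [this, Finset.mem_Icc]; omega
  have hne : S₀ ≠ S₁ := by
    intro h
    have h1 : (1:ℕ) ∈ (S₁ : Multiset ℕ) := by rw [hS1]; simp
    rw [← h] at h1
    have : (1:ℕ) = 2 := Multiset.eq_of_mem_replicate h1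
    omega
  have hnonneg : ∀ S ∈ A, S ∉ ({S₀, S₁} : Finset (Sym ℕ (k+1))) → 0 ≤ g S := by
    intro S hSA hSpair
    have hS0' : S ≠ S₀ := by
      intro h; exact hSpair (by rw [h]; exact Finset.mem_insert_self _ _)
    have hx : ∃ x ∈ (S : Multiset ℕ), x ≠ 2 := by
      by_contra hcon
      push_neg at hcon
      apply hS0'
      apply Sym.coe_injective
      rw [hS0]
      exact (Multiset.eq_replicate.mpr ⟨by simp, hcon⟩)
    obtain ⟨x, hxS, hx2⟩ := hx
    have hxI : x ∈ Finset.Icc 1 n := by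
      rw [hA, Finset.mem_sym_iff] at hSA
      exact hSA x hxS
    have hxT : x ∈ T := by
      rw [Finset.mem_Icc] at hxI
      rw [hTdef, Finset.mem_insert, Finset.mem_Icc]
      omega
    have hcard : 1 ≤ (T.filter (fun t => t ∈ S)).card := by
      apply Finset.card_pos.mpr
      exact ⟨x, Finset.mem_filter.mpr ⟨hxT, hxS⟩⟩
    have hcard' : (1:ℚ) ≤ ((T.filter (fun t => t ∈ S)).card : ℚ) := by exact_mod_cast hcard
    have hw := hwnn S hSA
    rw [hg]
    simp only
    nlinarith
  have hpairsub : ({S₀, S₁} : Finset (Sym ℕ (k+1))) ⊆ A := by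
    intro x hx
    rcases Finset.mem_insert.mp hx with rfl | hx
    · exact hS0A
    · rw [Finset.mem_singleton] at hx; rw [hx]; exact hS1A
  have hstep : g S₀ + g S₁ ≤ ∑ S ∈ A, g S := by
    rw [← Finset.sum_pair hne]
    exact Finset.sum_le_sum_of_subset_of_nonneg hpairsub hnonneg
  refine lt_of_lt_of_le ?_ hstep
  -- compute g S₀
  have hc0 : T.filter (fun t => t ∈ S₀) = ∅ := by
    rw [Finset.filter_eq_empty_iff]
    intro t ht hmem
    have : t = 2 := Multiset.eq_of_mem_replicate hmem
    rw [this] at ht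
    exact h2T ht
  have hw0 : ((S₀ : Multiset ℕ).map (aQ f)).prod = aQ f 2 ^ (k+1) := by
    rw [hS0]
    simp [Multiset.map_replicate, Multiset.prod_replicate]
    ring
  have hg0 : g S₀ = -(aQ f 2 ^ (k+1)) := by
    rw [hg]; simp only; rw [hc0, hw0]; simp
  -- compute g S₁
  have hw1 : ((S₁ : Multiset ℕ).map (aQ f)).prod = aQ f 1 * (aQ f 3 * aQ f 2 ^ (k-1)) := by
    rw [hS1]
    simp [Multiset.map_replicate, Multiset.prod_replicate]
  have hc1 : 2 ≤ (T.filter (fun t => t ∈ S₁)).card := by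
    have hsub : ({1, 3} : Finset ℕ) ⊆ T.filter (fun t => t ∈ S₁) := by
      intro x hx
      rcases Finset.mem_insert.mp hx with rfl | hx
      · exact Finset.mem_filter.mpr ⟨Finset.mem_insert_self _ _, by rw [hS1]; simp⟩
      · rw [Finset.mem_singleton] at hx
        subst hx
        refine Finset.mem_filter.mpr ⟨?_, ?_⟩
        · exact Finset.mem_insert_of_mem (Finset.mem_Icc.mpr ⟨le_refl 3, hn⟩)
        · rw [hS1]; simp
    calc 2 = ({1, 3} : Finset ℕ).card := by simp
    _ ≤ _ := Finset.card_le_card hsub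
  -- numeric inequality
  have hq1 : (0:ℚ) < aQ f 1 := hapos 1 le_rfl
  have hq2 : (0:ℚ) < aQ f 2 := hapos 2 (by omega)
  have hq3 : (0:ℚ) < aQ f 3 := hapos 3 (by omega)
  have hkey : aQ f 2 ^ 2 < aQ f 1 * aQ f 3 := by
    have p1 : (0:ℚ) < ((f.eval 1 : ℤ) : ℚ) := by exact_mod_cast hf 1 one_pos
    have p2 : (0:ℚ) < ((f.eval 2 : ℤ) : ℚ) := by exact_mod_cast hf 2 (by norm_num)
    have p3 : (0:ℚ) < ((f.eval 3 : ℤ) : ℚ) := by exact_mod_cast hf 3 (by norm_num)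
    have h2 : ((f.eval 1 : ℤ) : ℚ) * ((f.eval 3 : ℤ) : ℚ) < ((f.eval 2 : ℤ) : ℚ) ^ 2 := by
      exact_mod_cast hf2
    have e1 : aQ f 1 = 1 / ((f.eval 1 : ℤ) : ℚ) := by unfold aQ; norm_num
    have e2 : aQ f 2 = 1 / ((f.eval 2 : ℤ) : ℚ) := by unfold aQ; norm_num
    have e3 : aQ f 3 = 1 / ((f.eval 3 : ℤ) : ℚ) := by unfold aQ; norm_num
    rw [e1, e2, e3, div_pow, one_pow, div_mul_div_comm, one_mul]
    apply one_div_lt_one_div_of_lt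
    · positivity
    · exact h2
  have hnum : aQ f 2 ^ (k+1) < aQ f 1 * (aQ f 3 * aQ f 2 ^ (k-1)) := by
    have e : k + 1 = (k-1) + 2 := by omega
    rw [e, pow_add]
    calc aQ f 2 ^ (k-1) * aQ f 2 ^ 2 < aQ f 2 ^ (k-1) * (aQ f 1 * aQ f 3) := by
          apply mul_lt_mul_of_pos_left hkey (by positivity)
    _ = aQ f 1 * (aQ f 3 * aQ f 2 ^ (k-1)) := by ring
  have hc1' : (2:ℚ) ≤ ((T.filter (fun t => t ∈ S₁)).card : ℚ) := by exact_mod_cast hc1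
  have hw1pos : 0 < aQ f 1 * (aQ f 3 * aQ f 2 ^ (k-1)) := by positivity
  rw [hg0, hg]
  simp only
  rw [hw1]
  nlinarith
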